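/- Let u : ℝ^j → ℝ be a bounded measurable symmetric function and define G(Λ) = ∫_{ℝ^j} u(x_1,...,x_j) Λ(dx_1)⋯Λ(dx_j) on finite signed measures Λ. Then G is Fréchet differentiable at every finite measure Λ with gradient function ∇G(x;Λ) = j ∫_{ℝ^{j−1}} u(x, x_1,...,x_{j−1}) Λ(dx_1)⋯Λ(dx_{j−1}); that is, G(Λ+ν) − G(Λ) = ∫ ∇G(x;Λ) ν(dx) + o(‖ν‖). -/

import Mathlib

open MeasureTheory

/-- Total variation norm on the space of finite signed Borel measures on `ℝ`. -/
noncomputable def tvNorm (ν : SignedMeasure ℝ) : ℝ := (ν.totalVariation Set.univ).toReal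

/-- Integral of a function against a finite signed measure, via its Jordan decomposition. -/
noncomputable def signedIntegral (f : ℝ → ℝ) (ν : SignedMeasure ℝ) : ℝ :=
  (∫ x, f x ∂ν.toJordanDecomposition.posPart) - ∫ x, f x ∂ν.toJordanDecomposition.negPart

/-- The `j`-fold product integral `∫ u d(p - q)^{⊗j}` of `u` against the `j`-fold product
of the signed measure `p - q`, expanded by multilinearity over sign patterns. -/
noncomputable def prodIntegralDiff (j : ℕ) (u : (Fin j → ℝ) → ℝ) (p q : Measure ℝ) : ℝ :=
  ∑ s : Fin j → Bool,
    (-1 : ℝ) ^ (Finset.univ.filter fun i => s i = false).card *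
      ∫ x : Fin j → ℝ, u x ∂(Measure.pi fun i => if s i then p else q)

namespace MFD

lemma integrable_bdd {α : Type*} [MeasurableSpace α] {f : α → ℝ} (hf : Measurable f)
    {C : ℝ} (hC : ∀ x, |f x| ≤ C) (μ : Measure α) [IsFiniteMeasure μ] :
    Integrable f μ :=
  (integrable_const C).mono' hf.aestronglyMeasurable
    (Filter.Eventually.of_forall fun x => by simpa [Real.norm_eq_abs] using hC x)

variable {j : ℕ}

noncomputable def Fint (u : (Fin j → ℝ) → ℝ) (μ : Fin j → FiniteMeasure ℝ) : ℝ :=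
  ∫ x, u x ∂(Measure.pi fun i => (μ i : Measure ℝ))

lemma update_isFiniteMeasure (μ : Fin j → Measure ℝ) [∀ k, IsFiniteMeasure (μ k)]
    (i : Fin j) (a : Measure ℝ) [IsFiniteMeasure a] (k : Fin j) :
    IsFiniteMeasure (Function.update μ i a k) := by
  rcases eq_or_ne k i with rfl | h
  · rw [Function.update_self]; infer_instance
  · rw [Function.update_of_ne h]; infer_instance

lemma pi_update_add (μ : Fin j → Measure ℝ) [∀ k, IsFiniteMeasure (μ k)]
    (i : Fin j) (a b : Measure ℝ) [IsFiniteMeasure a] [IsFiniteMeasure b] :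
    Measure.pi (Function.update μ i (a + b)) =
      Measure.pi (Function.update μ i a) + Measure.pi (Function.update μ i b) := by
  haveI := update_isFiniteMeasure μ i (a + b)
  haveI := update_isFiniteMeasure μ i a
  haveI := update_isFiniteMeasure μ i b
  apply Measure.pi_eq
  intro s hs
  have key : ∀ c : Measure ℝ,
      (∏ k, (Function.update μ i c k) (s k)) = c (s i) * ∏ k ∈ Finset.univ \ {i}, μ k (s k) := by
    intro c
    have h1 : (fun k => (Function.update μ i c k) (s k)) =
        Function.update (fun k => μ k (s k)) i (c (s i)) :=
      funext (Function.apply_update (fun k (m : Measure ℝ) => m (s k)) μ i c)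
    rw [h1, Finset.prod_update_of_mem (Finset.mem_univ i)]
  rw [Measure.add_apply, Measure.pi_pi, Measure.pi_pi, key, key, key, Measure.add_apply,
    add_mul]

variable {u : (Fin j → ℝ) → ℝ}

lemma coe_update (μ : Fin j → FiniteMeasure ℝ) (i : Fin j) (a : FiniteMeasure ℝ) :
    (fun k => ((Function.update μ i a k : FiniteMeasure ℝ) : Measure ℝ)) =
      Function.update (fun k => (μ k : Measure ℝ)) i (a : Measure ℝ) :=
  funext (Function.apply_update (fun _ (m : FiniteMeasure ℝ) => (m : Measure ℝ)) μ i a)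

lemma Fint_update_add (hu : Measurable u) (hbd : ∃ C, ∀ x, |u x| ≤ C)
    (μ : Fin j → FiniteMeasure ℝ) (i : Fin j) (a b : FiniteMeasure ℝ) :
    Fint u (Function.update μ i (a + b)) =
      Fint u (Function.update μ i a) + Fint u (Function.update μ i b) := by
  obtain ⟨C, hC⟩ := hbd
  haveI := update_isFiniteMeasure (fun k => (μ k : Measure ℝ)) i (a : Measure ℝ)
  haveI := update_isFiniteMeasure (fun k => (μ k : Measure ℝ)) i (b : Measure ℝ)
  unfold Fint
  rw [coe_update, coe_update, coe_update, FiniteMeasure.toMeasure_add, pi_update_add]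
  exact integral_add_measure (integrable_bdd hu hC _) (integrable_bdd hu hC _)

lemma Fint_zero (μ : Fin j → FiniteMeasure ℝ) (i : Fin j) (h : μ i = 0) : Fint u μ = 0 := by
  have hpi : (Measure.pi fun k => (μ k : Measure ℝ)) = 0 := by
    rw [← Measure.measure_univ_eq_zero, Measure.pi_univ]
    apply Finset.prod_eq_zero (Finset.mem_univ i)
    rw [h]; simp
  rw [Fint, hpi, integral_zero_measure]

noncomputable def Tfun (u : (Fin j → ℝ) → ℝ)
    (m : Fin j → FiniteMeasure ℝ × FiniteMeasure ℝ) : ℝ :=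
  ∑ s : Fin j → Bool,
    (-1 : ℝ) ^ (Finset.univ.filter fun i => s i = false).card *
      Fint u (fun i => if s i then (m i).1 else (m i).2)

lemma slot_update (m : Fin j → FiniteMeasure ℝ × FiniteMeasure ℝ) (i : Fin j)
    (x : FiniteMeasure ℝ × FiniteMeasure ℝ) (s : Fin j → Bool) :
    (fun k => if s k then (Function.update m i x k).1 else (Function.update m i x k).2) =
      Function.update (fun k => if s k then (m k).1 else (m k).2) i
        (if s i then x.1 else x.2) :=
  funext (Function.apply_update
    (fun k (p : FiniteMeasure ℝ × FiniteMeasure ℝ) => if s k then p.1 else p.2) m i x)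

lemma Tfun_update_add (hu : Measurable u) (hbd : ∃ C, ∀ x, |u x| ≤ C)
    (m : Fin j → FiniteMeasure ℝ × FiniteMeasure ℝ) (i : Fin j)
    (x y : FiniteMeasure ℝ × FiniteMeasure ℝ) :
    Tfun u (Function.update m i (x + y)) =
      Tfun u (Function.update m i x) + Tfun u (Function.update m i y) := by
  unfold Tfun
  rw [← Finset.sum_add_distrib]
  refine Finset.sum_congr rfl fun s _ => ?_
  rw [slot_update, slot_update, slot_update, ← mul_add]
  congr 1
  have h1 : (if s i then (x + y).1 else (x + y).2) =
      (if s i then x.1 else x.2) + (if s i then y.1 else y.2) := by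
    cases hsi : s i <;> simp
  rw [h1, Fint_update_add hu hbd]

lemma Tfun_update_zero (m : Fin j → FiniteMeasure ℝ × FiniteMeasure ℝ) (i : Fin j) :
    Tfun u (Function.update m i 0) = 0 := by
  unfold Tfun
  apply Finset.sum_eq_zero; intro s _
  rw [slot_update, Fint_zero _ i (by simp), mul_zero]

noncomputable def Tmap (u : (Fin j → ℝ) → ℝ) (hu : Measurable u)
    (hbd : ∃ C, ∀ x, |u x| ≤ C) :
    MultilinearMap ℕ (fun _ : Fin j => FiniteMeasure ℝ × FiniteMeasure ℝ) ℝ where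
  toFun := Tfun u
  map_update_add' := by
    intro dec m i x y
    obtain rfl := Subsingleton.elim dec (instDecidableEqFin j)
    exact Tfun_update_add hu hbd m i x y
  map_update_smul' := by
    intro dec m i c x
    obtain rfl := Subsingleton.elim dec (instDecidableEqFin j)
    induction c with
    | zero => rw [zero_smul, Tfun_update_zero, zero_smul]
    | succ c ih => rw [succ_nsmul, Tfun_update_add hu hbd, ih, succ_nsmul]

lemma Tfun_eq_Fint (m : Fin j → FiniteMeasure ℝ × FiniteMeasure ℝ)
    (h : ∀ i, (m i).2 = 0) : Tfun u m = Fint u (fun i => (m i).1) := by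
  unfold Tfun
  rw [Finset.sum_eq_single_of_mem (fun _ => true) (Finset.mem_univ _)]
  · simp
  · intro s _ hs
    have hex : ∃ i, s i = false := by
      by_contra hcon
      push_neg at hcon
      exact hs (funext fun i => by simpa using hcon i)
    obtain ⟨i, hi⟩ := hex
    rw [Fint_zero _ i (by simp [hi, h i]), mul_zero]

lemma sign_eq_prod (s : Fin j → Bool) :
    (-1 : ℝ) ^ (Finset.univ.filter fun i => s i = false).card
      = ∏ k, (if s k = false then (-1 : ℝ) else 1) := by
  rw [Finset.prod_ite, Finset.prod_const, Finset.prod_const, one_pow, mul_one]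

lemma Tfun_flip (m : Fin j → FiniteMeasure ℝ × FiniteMeasure ℝ) (i : Fin j)
    (b : FiniteMeasure ℝ) :
    Tfun u (Function.update m i (0, b)) = - Tfun u (Function.update m i (b, 0)) := by
  unfold Tfun
  rw [← Finset.sum_neg_distrib]
  have hinv : Function.Involutive (fun s : Fin j → Bool => Function.update s i (!s i)) := by
    intro s
    funext k
    rcases eq_or_ne k i with rfl | h
    · simp
    · simp [Function.update_of_ne h]
  refine Fintype.sum_equiv (Function.Involutive.toPerm _ hinv) _ _ fun s => ?_
  have hsign : (-1 : ℝ) ^ (Finset.univ.filter fun k =>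
        (Function.update s i (!s i)) k = false).card
      = - (-1 : ℝ) ^ (Finset.univ.filter fun k => s k = false).card := by
    rw [sign_eq_prod, sign_eq_prod]
    have h1 : (fun k => (if (Function.update s i (!s i)) k = false then (-1 : ℝ) else 1)) =
        Function.update (fun k => if s k = false then (-1 : ℝ) else 1) i
          (if (!s i) = false then (-1 : ℝ) else 1) :=
      funext (Function.apply_update (fun _ (c : Bool) => if c = false then (-1 : ℝ) else 1)
        s i (!s i))
    rw [h1, Finset.prod_update_of_mem (Finset.mem_univ i),
      ← Finset.mul_prod_erase Finset.univ _ (Finset.mem_univ i), Finset.erase_eq]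
    cases hsi : s i <;> simp
  have hslot : (fun k => if s k then (Function.update m i ((0 : FiniteMeasure ℝ), b) k).1
        else (Function.update m i ((0 : FiniteMeasure ℝ), b) k).2) =
      (fun k => if (Function.update s i (!s i)) k
        then (Function.update m i (b, (0 : FiniteMeasure ℝ)) k).1
        else (Function.update m i (b, (0 : FiniteMeasure ℝ)) k).2) := by
    funext k
    rcases eq_or_ne k i with rfl | h
    · cases hsk : s k <;> simp [hsk]
    · simp [Function.update_of_ne h]
  have he : (Function.Involutive.toPerm _ hinv) s = Function.update s i (!s i) := rfl
  rw [he, hsign, hslot, neg_mul, neg_neg]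

lemma Fint_abs_le {C : ℝ} (hC : ∀ x, |u x| ≤ C) (μ : Fin j → FiniteMeasure ℝ) :
    |Fint u μ| ≤ C * ∏ i, ((μ i : Measure ℝ) Set.univ).toReal := by
  have h := norm_integral_le_of_norm_le_const
    (μ := Measure.pi fun i => (μ i : Measure ℝ)) (f := u) (C := C)
    (Filter.Eventually.of_forall fun x => by simpa [Real.norm_eq_abs] using hC x)
  rw [Real.norm_eq_abs] at h
  calc |Fint u μ| ≤ C * ((Measure.pi fun i => (μ i : Measure ℝ)) Set.univ).toReal := h
    _ = C * ∏ i, ((μ i : Measure ℝ) Set.univ).toReal := by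
        rw [Measure.pi_univ, ENNReal.toReal_prod]

lemma Tfun_abs_le {C : ℝ} (hC0 : 0 ≤ C) (hC : ∀ x, |u x| ≤ C)
    (m : Fin j → FiniteMeasure ℝ × FiniteMeasure ℝ) :
    |Tfun u m| ≤ (2 : ℝ) ^ j * (C * ∏ i,
      ((((m i).1 : Measure ℝ) Set.univ).toReal + (((m i).2 : Measure ℝ) Set.univ).toReal)) := by
  unfold Tfun
  calc |∑ s : Fin j → Bool, (-1 : ℝ) ^ (Finset.univ.filter fun i => s i = false).card *
          Fint u (fun i => if s i then (m i).1 else (m i).2)|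
      ≤ ∑ s : Fin j → Bool, |(-1 : ℝ) ^ (Finset.univ.filter fun i => s i = false).card *
          Fint u (fun i => if s i then (m i).1 else (m i).2)| :=
        Finset.abs_sum_le_sum_abs _ _
    _ ≤ ∑ _s : Fin j → Bool, (C * ∏ i,
          ((((m i).1 : Measure ℝ) Set.univ).toReal +
            (((m i).2 : Measure ℝ) Set.univ).toReal)) := by
        refine Finset.sum_le_sum fun s _ => ?_
        rw [abs_mul, abs_pow, abs_neg, abs_one, one_pow, one_mul]
        refine le_trans (Fint_abs_le hC _) ?_
        refine mul_le_mul_of_nonneg_left ?_ hC0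
        refine Finset.prod_le_prod (fun i _ => ENNReal.toReal_nonneg) fun i _ => ?_
        cases hsi : s i
        · simp only [hsi, if_neg Bool.false_ne_true]
          exact le_add_of_nonneg_left ENNReal.toReal_nonneg
        · simp only [hsi, if_pos rfl]
          exact le_add_of_nonneg_right ENNReal.toReal_nonneg
    _ = (2 : ℝ) ^ j * _ := by
        rw [Finset.sum_const, Finset.card_univ, nsmul_eq_mul]
        congr 1
        simp [Fintype.card_fun]


lemma cons_comp_perm {n : ℕ} (i : Fin (n + 1)) (x : ℝ) (z : Fin n → ℝ) :
    i.insertNth x z =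
      (Fin.cons x z : Fin (n + 1) → ℝ) ∘ ((finSuccEquiv' i).trans (finSuccEquiv n).symm) := by
  funext k
  refine Fin.succAboveCases i ?_ ?_ k
  · simp [Function.comp_apply, Equiv.trans_apply, finSuccEquiv'_at, finSuccEquiv_symm_none,
      Fin.insertNth_apply_same]
  · intro k'
    simp [Function.comp_apply, Equiv.trans_apply, finSuccEquiv'_succAbove,
      finSuccEquiv_symm_some, Fin.insertNth_apply_succAbove]

lemma measurable_consfun (n : ℕ) :
    Measurable (fun p : ℝ × (Fin n → ℝ) => (Fin.cons p.1 p.2 : Fin (n + 1) → ℝ)) := by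
  apply measurable_pi_iff.2
  intro k
  refine Fin.cases ?_ ?_ k
  · simpa using measurable_fst
  · intro k'
    have hk : Measurable fun x : ℝ × (Fin n → ℝ) => x.2 k' :=
      (measurable_pi_apply k').comp measurable_snd
    simpa using hk

lemma Fint_update_const {n : ℕ} {u : (Fin (n + 1) → ℝ) → ℝ} (hu : Measurable u)
    {C : ℝ} (hC : ∀ x, |u x| ≤ C)
    (husym : ∀ (σ : Equiv.Perm (Fin (n + 1))) (x : Fin (n + 1) → ℝ), u (x ∘ σ) = u x)
    (L : FiniteMeasure ℝ) (i : Fin (n + 1)) (μ : FiniteMeasure ℝ) :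
    Fint u (Function.update (fun _ => L) i μ) =
      ∫ x, (∫ z : Fin n → ℝ, u (Fin.cons x z) ∂(Measure.pi fun _ => (L : Measure ℝ)))
        ∂(μ : Measure ℝ) := by
  have hfam : (fun k => ((Function.update (fun _ => L) i μ k : FiniteMeasure ℝ) : Measure ℝ)) =
      Function.update (fun _ => (L : Measure ℝ)) i (μ : Measure ℝ) := coe_update _ _ _
  haveI : ∀ k, IsFiniteMeasure ((Function.update (fun _ => (L : Measure ℝ)) i
      (μ : Measure ℝ)) k) :=
    update_isFiniteMeasure _ i _
  set fam := Function.update (fun _ => (L : Measure ℝ)) i (μ : Measure ℝ) with hfamdef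
  have h1 : fam i = (μ : Measure ℝ) := Function.update_self _ _ _
  have h2 : (fun k : Fin n => fam (i.succAbove k)) = fun _ => (L : Measure ℝ) :=
    funext fun k => Function.update_of_ne (Fin.succAbove_ne i k) _ _
  have key := (measurePreserving_piFinSuccAbove fam i).integral_comp
    (MeasurableEquiv.measurableEmbedding _)
    (fun p => u ((MeasurableEquiv.piFinSuccAbove (fun _ => ℝ) i).symm p))
  simp only [MeasurableEquiv.symm_apply_apply] at key
  have hFint : Fint u (Function.update (fun _ => L) i μ) = ∫ x, u x ∂(Measure.pi fam) := by
    rw [Fint, hfam]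
  rw [hFint, key, h1, h2]
  have hsymm : (fun p : ℝ × (Fin n → ℝ) =>
      u ((MeasurableEquiv.piFinSuccAbove (fun _ => ℝ) i).symm p)) =
      fun p : ℝ × (Fin n → ℝ) => u (Fin.cons p.1 p.2) := by
    funext p
    have he : (MeasurableEquiv.piFinSuccAbove (fun _ => ℝ) i).symm p =
        i.insertNth p.1 p.2 := rfl
    rw [he, cons_comp_perm, husym]
  rw [hsymm]
  exact integral_prod _ (integrable_bdd ((hu.comp (measurable_consfun n)))
    (fun p => hC _) _)

lemma piecewise_compl_singleton {α : Type*} (i : Fin j) (f g : Fin j → α) :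
    (({i}ᶜ : Finset (Fin j))).piecewise f g = Function.update f i (g i) := by
  funext k
  rcases eq_or_ne k i with rfl | h
  · rw [Finset.piecewise_eq_of_notMem _ _ _ (by simp), Function.update_self]
  · rw [Finset.piecewise_eq_of_mem _ _ _ (by simp [h]), Function.update_of_ne h]

end MFD

open MFD in
/-- For a bounded measurable symmetric `u : ℝ^j → ℝ` (`j = n+1`), the functional
`G(η) = ∫ u dη^{⊗j}` is Fréchet differentiable (w.r.t. total variation) at every finite
nonnegative measure `Λ`, with gradient function
`∇G(x;Λ) = j ∫_{ℝ^{j-1}} u(x, x_1,…,x_{j-1}) Λ(dx_1)⋯Λ(dx_{j-1})`: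
`G(Λ+ν) - G(Λ) = ∫ ∇G(x;Λ) ν(dx) + o(‖ν‖)`. Here `Λ + ν` is represented via the Jordan
decomposition of `ν` as `(Λ + ν⁺) - ν⁻`. -/
theorem multilinear_frechet_derivative (n : ℕ) (u : (Fin (n + 1) → ℝ) → ℝ)
    (humeas : Measurable u) (hubd : ∃ C : ℝ, ∀ x, |u x| ≤ C)
    (husym : ∀ (σ : Equiv.Perm (Fin (n + 1))) (x : Fin (n + 1) → ℝ), u (x ∘ σ) = u x)
    (Λ : Measure ℝ) [IsFiniteMeasure Λ] :
    ∀ ε > 0, ∃ δ > 0, ∀ ν : SignedMeasure ℝ, tvNorm ν ≤ δ →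
      |prodIntegralDiff (n + 1) u (Λ + ν.toJordanDecomposition.posPart)
          ν.toJordanDecomposition.negPart -
        (∫ x : Fin (n + 1) → ℝ, u x ∂(Measure.pi fun _ => Λ)) -
        signedIntegral
          (fun x => (n + 1 : ℝ) *
            ∫ z : Fin n → ℝ, u (Fin.cons x z) ∂(Measure.pi fun _ => Λ)) ν| ≤
        ε * tvNorm ν := by
  classical
  intro ε hε
  obtain ⟨C, hC⟩ := hubd
  have hC0 : 0 ≤ C := le_trans (abs_nonneg _) (hC 0)
  set L : FiniteMeasure ℝ := ⟨Λ, inferInstance⟩ with hLdef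
  set Lu : ℝ := (Λ Set.univ).toReal with hLu
  have hLu0 : 0 ≤ Lu := ENNReal.toReal_nonneg
  set K' : ℝ := 2 ^ (n + 1) * (2 ^ (n + 1) * (C * (Lu + 1) ^ (n + 1))) with hK'
  have hK'0 : 0 ≤ K' := by positivity
  set K : ℝ := K' + 1 with hK
  have hKpos : 0 < K := by linarith
  refine ⟨min 1 (ε / K), lt_min one_pos (div_pos hε hKpos), ?_⟩
  intro ν htv
  set P : FiniteMeasure ℝ := ⟨ν.toJordanDecomposition.posPart, inferInstance⟩ with hPdef
  set N : FiniteMeasure ℝ := ⟨ν.toJordanDecomposition.negPart, inferInstance⟩ with hNdef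
  have htv_eq : tvNorm ν =
      ((P : Measure ℝ) Set.univ).toReal + ((N : Measure ℝ) Set.univ).toReal := by
    unfold tvNorm SignedMeasure.totalVariation
    rw [Measure.add_apply, ENNReal.toReal_add (measure_ne_top _ _) (measure_ne_top _ _)]
    rfl
  have htv0 : 0 ≤ tvNorm ν := by
    rw [htv_eq]; positivity
  have htv1 : tvNorm ν ≤ 1 := le_trans htv (min_le_left _ _)
  have htvK : tvNorm ν ≤ ε / K := le_trans htv (min_le_right _ _)
  set A : Fin (n + 1) → FiniteMeasure ℝ × FiniteMeasure ℝ := fun _ => (L, 0) with hA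
  set B : Fin (n + 1) → FiniteMeasure ℝ × FiniteMeasure ℝ := fun _ => (P, N) with hB
  -- Step 1 : identification with Tfun
  have hstep1 : prodIntegralDiff (n + 1) u (Λ + ν.toJordanDecomposition.posPart)
      ν.toJordanDecomposition.negPart = Tfun u (fun i => A i + B i) := by
    unfold prodIntegralDiff Tfun Fint
    refine Finset.sum_congr rfl fun s _ => ?_
    have hfun : (fun i => if s i = true then Λ + ν.toJordanDecomposition.posPart
          else ν.toJordanDecomposition.negPart) =
        (fun i => (((if s i = true then (A i + B i).1
          else (A i + B i).2) : FiniteMeasure ℝ) : Measure ℝ)) := by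
      funext i
      have hAB : A i + B i = (L + P, N) := by
        rw [hA, hB, Prod.mk_add_mk, zero_add]
      rw [hAB]
      cases hsi : s i
      · simp only [hsi, if_neg Bool.false_ne_true]; rfl
      · simp only [hsi, if_pos rfl]; rfl
    rw [hfun]
  -- Step 2 : multilinear expansion
  have hstep2 : Tfun u (fun i => A i + B i) =
      ∑ S : Finset (Fin (n + 1)), Tfun u (S.piecewise A B) :=
    (Tmap u humeas ⟨C, hC⟩).map_add_univ A B
  -- the good sets
  set good : Finset (Finset (Fin (n + 1))) :=
    insert Finset.univ
      (Finset.image (fun i : Fin (n + 1) => ({i}ᶜ : Finset (Fin (n + 1)))) Finset.univ)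
    with hgood
  have hT_univ : Tfun u (Finset.univ.piecewise A B) = ∫ x, u x ∂(Measure.pi fun _ => Λ) := by
    rw [Finset.piecewise_univ, Tfun_eq_Fint _ (fun i => rfl)]
    rfl
  have hT_single : ∀ i : Fin (n + 1), Tfun u (({i}ᶜ : Finset (Fin (n + 1))).piecewise A B) =
      (∫ x, (∫ z : Fin n → ℝ, u (Fin.cons x z) ∂(Measure.pi fun _ => Λ))
          ∂ν.toJordanDecomposition.posPart) -
        ∫ x, (∫ z : Fin n → ℝ, u (Fin.cons x z) ∂(Measure.pi fun _ => Λ))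
          ∂ν.toJordanDecomposition.negPart := by
    intro i
    rw [piecewise_compl_singleton]
    have hPN : B i = (P, (0 : FiniteMeasure ℝ)) + ((0 : FiniteMeasure ℝ), N) := by
      rw [hB, Prod.mk_add_mk, add_zero, zero_add]
    rw [hPN, Tfun_update_add humeas ⟨C, hC⟩, Tfun_flip]
    have e1 : Tfun u (Function.update A i (P, 0)) =
        Fint u (Function.update (fun _ => L) i P) := by
      rw [Tfun_eq_Fint]
      · congr 1
        exact funext (Function.apply_update
          (fun _ (p : FiniteMeasure ℝ × FiniteMeasure ℝ) => p.1) A i (P, 0))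
      · intro k
        rcases eq_or_ne k i with rfl | h
        · simp
        · simp [Function.update_of_ne h, hA]
    have e2 : Tfun u (Function.update A i (N, 0)) =
        Fint u (Function.update (fun _ => L) i N) := by
      rw [Tfun_eq_Fint]
      · congr 1
        exact funext (Function.apply_update
          (fun _ (p : FiniteMeasure ℝ × FiniteMeasure ℝ) => p.1) A i (N, 0))
      · intro k
        rcases eq_or_ne k i with rfl | h
        · simp
        · simp [Function.update_of_ne h, hA]
    rw [e1, e2, Fint_update_const humeas hC husym L i P, Fint_update_const humeas hC husym L i N]
    rfl
  have hnotmem : (Finset.univ : Finset (Fin (n + 1))) ∉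
      Finset.image (fun i : Fin (n + 1) => ({i}ᶜ : Finset (Fin (n + 1)))) Finset.univ := by
    rw [Finset.mem_image]
    rintro ⟨i, -, hi⟩
    have : i ∈ ({i}ᶜ : Finset (Fin (n + 1))) := by rw [hi]; exact Finset.mem_univ i
    simp at this
  have hinj : ∀ x ∈ (Finset.univ : Finset (Fin (n + 1))), ∀ y ∈ Finset.univ,
      ({x}ᶜ : Finset (Fin (n + 1))) = {y}ᶜ → x = y := by
    intro x _ y _ h
    have := compl_injective h
    exact Finset.singleton_injective this
  have hgoodsum : ∑ S ∈ good, Tfun u (S.piecewise A B) =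
      (∫ x, u x ∂(Measure.pi fun _ => Λ)) +
        signedIntegral (fun x => (n + 1 : ℝ) *
          ∫ z : Fin n → ℝ, u (Fin.cons x z) ∂(Measure.pi fun _ => Λ)) ν := by
    rw [hgood, Finset.sum_insert hnotmem, Finset.sum_image hinj, hT_univ]
    congr 1
    rw [Finset.sum_congr rfl (fun i _ => hT_single i), Finset.sum_const, Finset.card_univ,
      Fintype.card_fin, nsmul_eq_mul]
    rw [signedIntegral, integral_const_mul, integral_const_mul]
    push_cast
    ring
  -- bad terms bound
  have hbadcard : ∀ S ∈ (Finset.univ : Finset (Finset (Fin (n + 1)))) \ good,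
      S.card + 2 ≤ n + 1 := by
    intro S hS
    rw [Finset.mem_sdiff] at hS
    obtain ⟨-, hSg⟩ := hS
    by_contra hcard
    push_neg at hcard
    have hle : S.card ≤ n + 1 := by
      have := Finset.card_le_univ S
      simpa using this
    have : S.card = n + 1 ∨ S.card = n := by omega
    rcases this with h | h
    · apply hSg
      have : S = Finset.univ := by
        apply Finset.card_eq_iff_eq_univ S |>.1
        simpa using h
      rw [this, hgood]
      exact Finset.mem_insert_self _ _
    · apply hSg
      have hcc : (Sᶜ : Finset (Fin (n + 1))).card = 1 := by
        rw [Finset.card_compl, h]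
        simp
      obtain ⟨i, hi⟩ := Finset.card_eq_one.1 hcc
      have : S = ({i}ᶜ : Finset (Fin (n + 1))) := by
        rw [← compl_compl S, hi]
      rw [this, hgood]
      exact Finset.mem_insert_of_mem (Finset.mem_image_of_mem _ (Finset.mem_univ i))
  have hbadterm : ∀ S ∈ (Finset.univ : Finset (Finset (Fin (n + 1)))) \ good,
      |Tfun u (S.piecewise A B)| ≤
        2 ^ (n + 1) * (C * ((Lu + 1) ^ (n + 1) * (tvNorm ν * tvNorm ν))) := by
    intro S hS
    refine le_trans (Tfun_abs_le hC0 hC _) ?_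
    refine mul_le_mul_of_nonneg_left (mul_le_mul_of_nonneg_left ?_ hC0) (by positivity)
    have hfac : ∀ i : Fin (n + 1),
        ((((S.piecewise A B i).1 : Measure ℝ)) Set.univ).toReal +
          (((S.piecewise A B i).2 : Measure ℝ) Set.univ).toReal =
        if i ∈ S then Lu else tvNorm ν := by
      intro i
      by_cases h : i ∈ S
      · rw [Finset.piecewise_eq_of_mem _ _ _ h, if_pos h, hA]
        show ((Λ : Measure ℝ) Set.univ).toReal + ((0 : Measure ℝ) Set.univ).toReal = Lu
        simp [hLu]
      · rw [Finset.piecewise_eq_of_notMem _ _ _ h, if_neg h, hB]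
        exact htv_eq.symm
    calc (∏ i, (((((S.piecewise A B i).1 : Measure ℝ)) Set.univ).toReal +
            (((S.piecewise A B i).2 : Measure ℝ) Set.univ).toReal))
        = ∏ i, (if i ∈ S then Lu else tvNorm ν) := by
          exact Finset.prod_congr rfl fun i _ => hfac i
      _ = Lu ^ S.card * tvNorm ν ^ ((n + 1) - S.card) := by
          rw [Finset.prod_ite, Finset.prod_const, Finset.prod_const]
          congr 2
          · rw [Finset.filter_mem_eq_inter, Finset.univ_inter]
          · rw [Finset.filter_not, Finset.filter_mem_eq_inter, Finset.univ_inter,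
              Finset.card_sdiff_of_subset (Finset.subset_univ S), Finset.card_univ, Fintype.card_fin]
      _ ≤ (Lu + 1) ^ (n + 1) * (tvNorm ν * tvNorm ν) := by
          have h1 : Lu ^ S.card ≤ (Lu + 1) ^ (n + 1) := by
            calc Lu ^ S.card ≤ (Lu + 1) ^ S.card :=
                  pow_le_pow_left₀ hLu0 (by linarith) _
              _ ≤ (Lu + 1) ^ (n + 1) := by
                  apply pow_le_pow_right₀ (by linarith)
                  have := hbadcard S hS
                  omega
          have h2 : tvNorm ν ^ ((n + 1) - S.card) ≤ tvNorm ν * tvNorm ν := by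
            have hm : 2 ≤ (n + 1) - S.card := by
              have := hbadcard S hS
              omega
            calc tvNorm ν ^ ((n + 1) - S.card) ≤ tvNorm ν ^ 2 :=
                  pow_le_pow_of_le_one htv0 htv1 hm
              _ = tvNorm ν * tvNorm ν := by rw [pow_two]
          exact mul_le_mul h1 h2 (by positivity) (by positivity)
  -- assemble
  have hE : prodIntegralDiff (n + 1) u (Λ + ν.toJordanDecomposition.posPart)
      ν.toJordanDecomposition.negPart -
      (∫ x : Fin (n + 1) → ℝ, u x ∂(Measure.pi fun _ => Λ)) -
      signedIntegral (fun x => (n + 1 : ℝ) *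
        ∫ z : Fin n → ℝ, u (Fin.cons x z) ∂(Measure.pi fun _ => Λ)) ν =
      ∑ S ∈ (Finset.univ : Finset (Finset (Fin (n + 1)))) \ good,
        Tfun u (S.piecewise A B) := by
    rw [hstep1, hstep2, ← Finset.sum_sdiff (Finset.subset_univ good), hgoodsum]
    ring
  rw [hE]
  have habs : |∑ S ∈ (Finset.univ : Finset (Finset (Fin (n + 1)))) \ good,
      Tfun u (S.piecewise A B)| ≤
      (((Finset.univ : Finset (Finset (Fin (n + 1)))) \ good).card : ℝ) *
        (2 ^ (n + 1) * (C * ((Lu + 1) ^ (n + 1) * (tvNorm ν * tvNorm ν)))) := by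
    refine le_trans (Finset.abs_sum_le_sum_abs _ _) ?_
    have h := Finset.sum_le_card_nsmul
      ((Finset.univ : Finset (Finset (Fin (n + 1)))) \ good)
      (fun S => |Tfun u (S.piecewise A B)|)
      (2 ^ (n + 1) * (C * ((Lu + 1) ^ (n + 1) * (tvNorm ν * tvNorm ν)))) hbadterm
    rw [nsmul_eq_mul] at h
    exact h
  have hcard : (((Finset.univ : Finset (Finset (Fin (n + 1)))) \ good).card : ℝ) ≤
      2 ^ (n + 1) := by
    have h := Finset.card_le_univ ((Finset.univ : Finset (Finset (Fin (n + 1)))) \ good)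
    have h2 : Fintype.card (Finset (Fin (n + 1))) = 2 ^ (n + 1) := by
      rw [Fintype.card_finset, Fintype.card_fin]
    rw [h2] at h
    exact_mod_cast h
  refine le_trans habs ?_
  have hb0 : (0:ℝ) ≤ 2 ^ (n + 1) * (C * ((Lu + 1) ^ (n + 1) * (tvNorm ν * tvNorm ν))) := by
    positivity
  refine le_trans (mul_le_mul_of_nonneg_right hcard hb0) ?_
  have hrw : (2:ℝ) ^ (n + 1) * (2 ^ (n + 1) * (C * ((Lu + 1) ^ (n + 1) *
      (tvNorm ν * tvNorm ν)))) = K' * (tvNorm ν * tvNorm ν) := by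
    rw [hK']; ring
  rw [hrw]
  have h1 : K' * (tvNorm ν * tvNorm ν) ≤ K' * ((ε / K) * tvNorm ν) := by
    apply mul_le_mul_of_nonneg_left _ hK'0
    exact mul_le_mul_of_nonneg_right htvK htv0
  refine le_trans h1 ?_
  have h2 : K' * (ε / K) ≤ ε := by
    have hKK : K' ≤ K := by rw [hK]; linarith
    have h3 : K' * (ε / K) ≤ K * (ε / K) :=
      mul_le_mul_of_nonneg_right hKK (le_of_lt (div_pos hε hKpos))
    have h4 : K * (ε / K) = ε := by
      rw [mul_comm, div_mul_cancel₀ ε (ne_of_gt hKpos)]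
    linarith
  calc K' * (ε / K * tvNorm ν) = (K' * (ε / K)) * tvNorm ν := by ring
    _ ≤ ε * tvNorm ν := mul_le_mul_of_nonneg_right h2 htv0
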